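/- arXiv:2508.15238 — 3 statements merged into one kernel-verified Lean document; each statement's English description precedes it below -/
import Mathlib

section
/- Let 𝒢 = (V, ℰ) be a temporal graph and let [ts,te] ⊆ [ts',te']. Let 𝒢' be the temporal graph on V whose temporal edge set is the temporal edge set of 𝒯_{[ts',te']}(𝒢). Then 𝒯_{[ts,te]}(𝒢) = 𝒯_{[ts,te]}(𝒢'), i.e., the temporal k-core of 𝒢 over [ts,te] can be computed inside the temporal k-core of 𝒢 over the larger interval [ts',te']. -/
open scoped Classical

noncomputable section

/-- A temporal graph on a vertex type `V`: a finite set of temporal edges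
`(u, v, t)` with `u ≠ v`, symmetric in the two endpoints. -/
structure TemporalGraph (V : Type*) where
  E : Finset (V × V × ℕ)
  ne : ∀ e ∈ E, e.1 ≠ e.2.1
  symm : ∀ u v t, (u, v, t) ∈ E → (v, u, t) ∈ E

variable {V : Type*}

/-- The detemporalized (projected) simple graph of `G` over the interval `[ts, te]`. -/
def detemp (G : TemporalGraph V) (ts te : ℕ) : SimpleGraph V where
  Adj u v := ∃ t, ts ≤ t ∧ t ≤ te ∧ (u, v, t) ∈ G.E
  symm := ⟨fun u v ⟨t, h1, h2, h3⟩ => ⟨t, h1, h2, G.symm u v t h3⟩⟩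
  loopless := ⟨fun u ⟨_, _, _, h3⟩ => (G.ne _ h3) rfl⟩

/-- The detemporalized simple graph of `G` over all timestamps. -/
def detempAll (G : TemporalGraph V) : SimpleGraph V where
  Adj u v := ∃ t, (u, v, t) ∈ G.E
  symm := ⟨fun u v ⟨t, h3⟩ => ⟨t, G.symm u v t h3⟩⟩
  loopless := ⟨fun u ⟨_, h3⟩ => (G.ne _ h3) rfl⟩

/-- `S` is `k`-dense in the simple graph `G` if every vertex of `S` has at
least `k` neighbors inside `S`. -/
def kDense (k : ℕ) (G : SimpleGraph V) (S : Set V) : Prop :=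
  ∀ v ∈ S, k ≤ {u | u ∈ S ∧ G.Adj v u}.ncard

/-- `C_k(G)`: the union of all `k`-dense sets of `G`. -/
def coreSet (k : ℕ) (G : SimpleGraph V) : Set V :=
  ⋃₀ {S | kDense k G S}

/-- The projected temporal edge set of `G` over `[ts, te]`. -/
def projE (G : TemporalGraph V) (ts te : ℕ) : Finset (V × V × ℕ) :=
  G.E.filter fun e => ts ≤ e.2.2 ∧ e.2.2 ≤ te

/-- The vertex set of the temporal `k`-core of `G` over `[ts, te]`. -/
def tcoreV (k : ℕ) (G : TemporalGraph V) (ts te : ℕ) : Set V :=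
  coreSet k (detemp G ts te)

/-- The temporal edge set of the temporal `k`-core of `G` over `[ts, te]`. -/
def tcoreE (k : ℕ) (G : TemporalGraph V) (ts te : ℕ) : Finset (V × V × ℕ) :=
  (projE G ts te).filter fun e => e.1 ∈ tcoreV k G ts te ∧ e.2.1 ∈ tcoreV k G ts te

/-- The `k`-core time `σ_x(v, G)` of a vertex `v` w.r.t. start timestamp `x`,
in `ℕ∞` (it is `⊤` if no suitable timestamp exists). -/
def coreTime (k : ℕ) (G : TemporalGraph V) (x : ℕ) (v : V) : ℕ∞ :=
  sInf ((fun t : ℕ => (t : ℕ∞)) '' {t | x ≤ t ∧ v ∈ tcoreV k G x t})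

/-- The `k`-core time `σ_x(u, v, G)` of a pair `(u, v)` w.r.t. start timestamp `x`. -/
def edgeCoreTime (k : ℕ) (G : TemporalGraph V) (x : ℕ) (u v : V) : ℕ∞ :=
  sInf ((fun t : ℕ => (t : ℕ∞)) ''
    {t | x ≤ t ∧ u ∈ tcoreV k G x t ∧ v ∈ tcoreV k G x t ∧ (detemp G x t).Adj u v})

/-- The support time `Sup_x(u, v, G)`: the minimum timestamp `t ≥ x` with `(u, v, t) ∈ ℰ`. -/
def supTime (G : TemporalGraph V) (x : ℕ) (u v : V) : ℕ∞ :=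
  sInf ((fun t : ℕ => (t : ℕ∞)) '' {t | x ≤ t ∧ (u, v, t) ∈ G.E})

/-- The `k`-degree time `d_x(v, G)`: the minimum timestamp `t ≥ x` such that `v`
has at least `k` neighbors in the detemporalized graph over `[x, t]`. -/
def degTime (k : ℕ) (G : TemporalGraph V) (x : ℕ) (v : V) : ℕ∞ :=
  sInf ((fun t : ℕ => (t : ℕ∞)) '' {t | x ≤ t ∧ k ≤ ((detemp G x t).neighborSet v).ncard})

/-- The `k`-th smallest element of a multiset of values in `ℕ∞`
(`⊤` if the multiset has fewer than `k` elements). -/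
def kthSmallest (m : Multiset ℕ∞) (k : ℕ) : ℕ∞ :=
  (m.sort (· ≤ ·)).getD (k - 1) ⊤

end

lemma coreSet_kDense {V : Type*} [Fintype V] (k : ℕ) (G : SimpleGraph V) :
    kDense k G (coreSet k G) := by
  intro v hv
  obtain ⟨S, hS, hvS⟩ := hv
  refine le_trans (hS v hvS) (Set.ncard_le_ncard ?_ (Set.toFinite _))
  rintro u ⟨huS, hadj⟩
  exact ⟨⟨S, hS, huS⟩, hadj⟩

lemma mem_coreSet_of_kDense {V : Type*} (k : ℕ) (G : SimpleGraph V) {S : Set V}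
    (hS : kDense k G S) {v : V} (hv : v ∈ S) : v ∈ coreSet k G :=
  ⟨S, hS, hv⟩

lemma coreSet_mono {V : Type*} [Fintype V] (k : ℕ) {G1 G2 : SimpleGraph V}
    (h : ∀ u v, G1.Adj u v → G2.Adj u v) : coreSet k G1 ⊆ coreSet k G2 := by
  rintro v ⟨S, hS, hvS⟩
  refine ⟨S, fun w hw => le_trans (hS w hw) (Set.ncard_le_ncard ?_ (Set.toFinite _)), hvS⟩
  rintro u ⟨huS, hadj⟩
  exact ⟨huS, h _ _ hadj⟩

/-- If `[ts, te] ⊆ [ts', te']` and `G'` is the temporal graph whose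
temporal edge set is the temporal edge set of `𝒯_{[ts', te']}(G)`, then
`𝒯_{[ts, te]}(G) = 𝒯_{[ts, te]}(G')`. -/
theorem stmt2 {V : Type*} [Fintype V] (k : ℕ) (G G' : TemporalGraph V)
    (ts te ts' te' : ℕ) (h1 : ts' ≤ ts) (h2 : ts ≤ te) (h3 : te ≤ te')
    (hG' : G'.E = tcoreE k G ts' te') :
    tcoreV k G ts te = tcoreV k G' ts te ∧
      tcoreE k G ts te = tcoreE k G' ts te := by
  set C := tcoreV k G ts te with hC
  -- C ⊆ the core over the bigger interval
  have hmono : C ⊆ tcoreV k G ts' te' := by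
    apply coreSet_mono
    rintro u v ⟨t, ht1, ht2, ht3⟩
    exact ⟨t, le_trans h1 ht1, le_trans ht2 h3, ht3⟩
  -- detemp G' ts te ≤ detemp G ts te
  have hle : ∀ u v, (detemp G' ts te).Adj u v → (detemp G ts te).Adj u v := by
    rintro u v ⟨t, ht1, ht2, ht3⟩
    rw [hG'] at ht3
    simp only [tcoreE, projE, Finset.mem_filter] at ht3
    exact ⟨t, ht1, ht2, ht3.1.1⟩
  -- C is k-dense in detemp G' ts te
  have hdense : kDense k (detemp G' ts te) C := by
    intro v hv
    refine le_trans (coreSet_kDense k (detemp G ts te) v hv) (le_of_eq ?_)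
    congr 1
    ext u
    constructor
    · rintro ⟨huC, t, ht1, ht2, ht3⟩
      refine ⟨huC, t, ht1, ht2, ?_⟩
      rw [hG']
      simp only [tcoreE, projE, Finset.mem_filter]
      exact ⟨⟨ht3, le_trans h1 ht1, le_trans ht2 h3⟩, hmono hv, hmono huC⟩
    · rintro ⟨huC, hadj⟩
      exact ⟨huC, hle _ _ hadj⟩
  have hV : tcoreV k G ts te = tcoreV k G' ts te := by
    apply Set.Subset.antisymm
    · intro v hv
      exact mem_coreSet_of_kDense k _ hdense hv
    · exact coreSet_mono k hle
  refine ⟨hV, ?_⟩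
  ext ⟨u, v, t⟩
  simp only [tcoreE, projE, Finset.mem_filter, hG', ← hV, ← hC]
  constructor
  · rintro ⟨⟨he, ht1, ht2⟩, hu, hv⟩
    exact ⟨⟨⟨⟨he, le_trans h1 ht1, le_trans ht2 h3⟩, hmono hu, hmono hv⟩, ht1, ht2⟩, hu, hv⟩
  · rintro ⟨⟨⟨he, _⟩, ht1, ht2⟩, hu, hv⟩
    exact ⟨⟨he.1, ht1, ht2⟩, hu, hv⟩
end

section
/- Let 𝒢 = (V, ℰ) be a temporal graph, x a timestamp, and (u,v) a pair of distinct vertices adjacent in the detemporalized graph of 𝒢. Then, in ℕ ∪ {∞}, the edge k-core time satisfies σ_x(u,v,𝒢) = max{ Sup_x(u,v,𝒢), σ_x(u,𝒢), σ_x(v,𝒢) }. -/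
open scoped Classical

/-- For a pair of distinct vertices `(u, v)` adjacent in the
detemporalized graph of `G`, the edge `k`-core time satisfies
`σ_x(u, v, G) = max {Sup_x(u, v, G), σ_x(u, G), σ_x(v, G)}`. -/
theorem stmt6 {V : Type*} [Fintype V] (k : ℕ) (G : TemporalGraph V)
    (x : ℕ) (u v : V) (hadj : (detempAll G).Adj u v) :
    edgeCoreTime k G x u v =
      max (supTime G x u v) (max (coreTime k G x u) (coreTime k G x v)) := by
  have hmono : ∀ {t t' : ℕ}, t ≤ t' → tcoreV k G x t ⊆ tcoreV k G x t' := by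
    intro t t' h w hw
    obtain ⟨S, hS, hwS⟩ := hw
    refine ⟨S, ?_, hwS⟩
    intro z hz
    refine le_trans (hS z hz) (Set.ncard_le_ncard ?_ (Set.toFinite _))
    rintro y ⟨hyS, s, h1, h2, h3⟩
    exact ⟨hyS, s, h1, h2.trans h, h3⟩
  set Ssup : Set ℕ := {t | x ≤ t ∧ (u, v, t) ∈ G.E} with hSsup
  set Su : Set ℕ := {t | x ≤ t ∧ u ∈ tcoreV k G x t} with hSu
  set Sv : Set ℕ := {t | x ≤ t ∧ v ∈ tcoreV k G x t} with hSv
  have himg : ∀ S : Set ℕ, S.Nonempty →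
      sInf ((fun t : ℕ => (t : ℕ∞)) '' S) = (((sInf S : ℕ)) : ℕ∞) := by
    intro S hS
    refine le_antisymm (sInf_le ⟨sInf S, Nat.sInf_mem hS, rfl⟩) ?_
    exact le_sInf (by rintro b ⟨t, ht, rfl⟩; simp only []; exact_mod_cast Nat.sInf_le ht)
  -- R ≤ L
  have hRL : max (supTime G x u v) (max (coreTime k G x u) (coreTime k G x v)) ≤
      edgeCoreTime k G x u v := by
    apply le_sInf
    rintro b ⟨t, ⟨hxt, hut, hvt, s, hs1, hs2, hs3⟩, rfl⟩
    refine max_le ?_ (max_le ?_ ?_)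
    · calc supTime G x u v ≤ (s : ℕ∞) := sInf_le ⟨s, ⟨hs1, hs3⟩, rfl⟩
        _ ≤ (t : ℕ∞) := by exact_mod_cast hs2
    · exact sInf_le ⟨t, ⟨hxt, hut⟩, rfl⟩
    · exact sInf_le ⟨t, ⟨hxt, hvt⟩, rfl⟩
  -- L ≤ R
  by_cases hne : Ssup.Nonempty ∧ Su.Nonempty ∧ Sv.Nonempty
  · obtain ⟨h1, h2, h3⟩ := hne
    set a := sInf Ssup
    set b := sInf Su
    set c := sInf Sv
    have ha := Nat.sInf_mem h1
    have hb := Nat.sInf_mem h2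
    have hc := Nat.sInf_mem h3
    set t0 := max a (max b c) with ht0
    have hL : edgeCoreTime k G x u v ≤ (t0 : ℕ∞) := by
      apply sInf_le
      refine ⟨t0, ⟨ha.1.trans (le_max_left _ _), ?_, ?_, a, ha.1,
        le_max_left _ _, ha.2⟩, rfl⟩
      · exact hmono ((le_max_left b c).trans (le_max_right a _)) hb.2
      · exact hmono ((le_max_right b c).trans (le_max_right a _)) hc.2
    have hR : max (supTime G x u v) (max (coreTime k G x u) (coreTime k G x v))
        = (t0 : ℕ∞) := by
      rw [supTime, coreTime, coreTime, himg _ h1, himg _ h2, himg _ h3, ht0]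
      have hmc : Monotone (fun n : ℕ => (n : ℕ∞)) := fun p q h => by simp only []; exact_mod_cast h
      rw [hmc.map_max, hmc.map_max]
    rw [hR] at hRL ⊢
    exact le_antisymm hL hRL
  · have hR : max (supTime G x u v) (max (coreTime k G x u) (coreTime k G x v)) = ⊤ := by
      rcases not_and_or.mp hne with h | h
      · rw [Set.not_nonempty_iff_eq_empty] at h
        have : supTime G x u v = ⊤ := by
          rw [supTime, ← hSsup, h, Set.image_empty, sInf_empty]
        exact le_antisymm le_top (this ▸ le_max_left _ _)
      · rcases not_and_or.mp h with h | h <;>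
          rw [Set.not_nonempty_iff_eq_empty] at h
        · have : coreTime k G x u = ⊤ := by
            rw [coreTime, ← hSu, h, Set.image_empty, sInf_empty]
          exact le_antisymm le_top (le_trans (this ▸ le_max_left _ _) (le_max_right _ _))
        · have : coreTime k G x v = ⊤ := by
            rw [coreTime, ← hSv, h, Set.image_empty, sInf_empty]
          exact le_antisymm le_top (le_trans (this ▸ le_max_right _ _) (le_max_right _ _))
    rw [hR] at hRL ⊢
    exact le_antisymm le_top hRL
end

section
/- Let 𝒢 = (V, ℰ) be a temporal graph with k ≥ 1, let ts ≤ te, and suppose the temporal k-core 𝒯_{[ts,te]}(𝒢) contains at least one temporal edge. Let ts* and te* be the minimum and maximum timestamps among the temporal edges of 𝒯_{[ts,te]}(𝒢). Then ts ≤ ts* ≤ te* ≤ te and 𝒯_{[ts*,te*]}(𝒢) = 𝒯_{[ts,te]}(𝒢); i.e., the temporal k-core over its own tightest time interval equals the original temporal k-core. -/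
open scoped Classical

lemma dense_subset_core {V : Type*} {k : ℕ} {Gr : SimpleGraph V} {S : Set V}
    (h : kDense k Gr S) : S ⊆ coreSet k Gr :=
  fun v hv => Set.mem_sUnion.2 ⟨S, h, hv⟩

lemma core_dense {V : Type*} [Finite V] {k : ℕ} {Gr : SimpleGraph V} :
    kDense k Gr (coreSet k Gr) := by
  intro v hv
  obtain ⟨S, hS, hvS⟩ := Set.mem_sUnion.1 hv
  refine le_trans (hS v hvS) (Set.ncard_le_ncard ?_ (Set.toFinite _))
  exact fun u hu => ⟨dense_subset_core hS hu.1, hu.2⟩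

lemma core_mono {V : Type*} [Finite V] {k : ℕ} {Gr Gr' : SimpleGraph V}
    (h : ∀ u v, Gr.Adj u v → Gr'.Adj u v) : coreSet k Gr ⊆ coreSet k Gr' := by
  intro v hv
  obtain ⟨S, hS, hvS⟩ := Set.mem_sUnion.1 hv
  refine Set.mem_sUnion.2 ⟨S, ?_, hvS⟩
  intro w hw
  refine le_trans (hS w hw) (Set.ncard_le_ncard ?_ (Set.toFinite _))
  exact fun u hu => ⟨hu.1, h _ _ hu.2⟩

/-- If `k ≥ 1`, `ts ≤ te`, and the temporal `k`-core `𝒯_{[ts, te]}(G)`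
has at least one temporal edge, then its tightest time interval `[ts*, te*]`
(where `ts*` and `te*` are the minimum and maximum edge timestamps) satisfies
`ts ≤ ts* ≤ te* ≤ te` and `𝒯_{[ts*, te*]}(G) = 𝒯_{[ts, te]}(G)`. -/
theorem stmt13 {V : Type*} [Fintype V] (k : ℕ) (hk : 1 ≤ k)
    (G : TemporalGraph V) (ts te : ℕ) (hle : ts ≤ te)
    (hne : (tcoreE k G ts te).Nonempty)
    (tsS teS : ℕ)
    (htsS : tsS = (((tcoreE k G ts te).image fun e => e.2.2).min' (hne.image _)))
    (hteS : teS = (((tcoreE k G ts te).image fun e => e.2.2).max' (hne.image _))) :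
    ts ≤ tsS ∧ tsS ≤ teS ∧ teS ≤ te ∧
      tcoreV k G tsS teS = tcoreV k G ts te ∧
      tcoreE k G tsS teS = tcoreE k G ts te := by
  -- timestamps of core edges lie in [ts, te]
  have hts_mem : ∀ e ∈ tcoreE k G ts te, ts ≤ e.2.2 ∧ e.2.2 ≤ te := by
    intro e he
    have := (Finset.mem_filter.1 he).1
    exact (Finset.mem_filter.1 this).2
  have hmin : ∀ e ∈ tcoreE k G ts te, tsS ≤ e.2.2 ∧ e.2.2 ≤ teS := by
    intro e he
    constructor
    · rw [htsS]; exact Finset.min'_le _ e.2.2 (Finset.mem_image_of_mem (fun e => e.2.2) he)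
    · rw [hteS]; exact Finset.le_max' _ e.2.2 (Finset.mem_image_of_mem (fun e => e.2.2) he)
  have h1 : ts ≤ tsS := by
    rw [htsS]
    obtain ⟨e, he, heq⟩ := Finset.mem_image.1
      (Finset.min'_mem (((tcoreE k G ts te).image fun e => e.2.2)) (hne.image _))
    rw [← heq]; exact (hts_mem e he).1
  have h3 : teS ≤ te := by
    rw [hteS]
    obtain ⟨e, he, heq⟩ := Finset.mem_image.1
      (Finset.max'_mem (((tcoreE k G ts te).image fun e => e.2.2)) (hne.image _))
    rw [← heq]; exact (hts_mem e he).2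
  obtain ⟨e₀, he₀⟩ := hne
  have h2 : tsS ≤ teS := le_trans (hmin e₀ he₀).1 (hmin e₀ he₀).2
  -- subgraph relation
  have hadj : ∀ u v, (detemp G tsS teS).Adj u v → (detemp G ts te).Adj u v := by
    rintro u v ⟨t, ht1, ht2, ht3⟩
    exact ⟨t, le_trans h1 ht1, le_trans ht2 h3, ht3⟩
  have hV : tcoreV k G tsS teS = tcoreV k G ts te := by
    apply Set.Subset.antisymm
    · exact core_mono hadj
    · -- tcoreV ts te is k-dense in detemp tsS teS
      apply dense_subset_core (k := k) (Gr := detemp G tsS teS)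
      intro v hv
      have hd := core_dense (k := k) (Gr := detemp G ts te) v hv
      refine le_trans hd (le_of_eq (congrArg Set.ncard ?_))
      ext u
      simp only [Set.mem_setOf_eq]
      constructor
      · rintro ⟨hu, t, ht1, ht2, ht3⟩
        refine ⟨hu, t, ?_, ?_, ht3⟩
        · have : (v, u, t) ∈ tcoreE k G ts te := by
            refine Finset.mem_filter.2 ⟨Finset.mem_filter.2 ⟨ht3, ht1, ht2⟩, hv, hu⟩
          exact (hmin _ this).1
        · have : (v, u, t) ∈ tcoreE k G ts te := by
            refine Finset.mem_filter.2 ⟨Finset.mem_filter.2 ⟨ht3, ht1, ht2⟩, hv, hu⟩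
          exact (hmin _ this).2
      · rintro ⟨hu, ha⟩
        exact ⟨hu, hadj v u ha⟩
  have hE : tcoreE k G tsS teS = tcoreE k G ts te := by
    ext e
    rw [tcoreE, tcoreE, Finset.mem_filter, Finset.mem_filter, projE, projE, Finset.mem_filter, Finset.mem_filter]
    constructor
    · rintro ⟨⟨heE, ht1, ht2⟩, hu, hv⟩
      exact ⟨⟨heE, le_trans h1 ht1, le_trans ht2 h3⟩,
        hV ▸ hu, hV ▸ hv⟩
    · rintro ⟨⟨heE, ht1, ht2⟩, hu, hv⟩
      have he : e ∈ tcoreE k G ts te :=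
        Finset.mem_filter.2 ⟨Finset.mem_filter.2 ⟨heE, ht1, ht2⟩, hu, hv⟩
      exact ⟨⟨heE, (hmin e he).1, (hmin e he).2⟩, hV.symm ▸ hu, hV.symm ▸ hv⟩
  exact ⟨h1, h2, h3, hV, hE⟩
end
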